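/- arXiv:1301.3230 — 3 statements merged into one kernel-verified Lean document; each statement's English description precedes it below -/
import Mathlib

section
/- Let k ≥ 1 and let p_1, ..., p_k be reals with 0 ≤ p_i ≤ 1/k for all i. Then ∑_{i=1}^k ∏_{j≠i} (1 - p_j) ≥ 1. -/
open Finset in
lemma weier {ι : Type*} [DecidableEq ι] (s : Finset ι) (p : ι → ℝ) (h0 : ∀ i, 0 ≤ p i)
    (h1 : ∀ i, p i ≤ 1) : 1 - ∑ j ∈ s, p j ≤ ∏ j ∈ s, (1 - p j) := by
  induction s using Finset.induction with
  | empty => simp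
  | @insert a s hx ih =>
    rw [Finset.sum_insert hx, Finset.prod_insert hx]
    have hp : (0:ℝ) ≤ ∏ j ∈ s, (1 - p j) :=
      Finset.prod_nonneg fun j _ => by linarith [h1 j]
    have hs : ∑ j ∈ s, p j ≥ 0 := Finset.sum_nonneg fun j _ => h0 j
    nlinarith [h0 a, h1 a]

open Finset in
theorem stmt1 (k : ℕ) (hk : 1 ≤ k) (p : Fin k → ℝ)
    (h0 : ∀ i, 0 ≤ p i) (h1 : ∀ i, p i ≤ 1 / (k : ℝ)) :
    1 ≤ ∑ i : Fin k, ∏ j ∈ univ.erase i, (1 - p j) := by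
  have hk0 : (0:ℝ) < k := by exact_mod_cast hk
  have h1' : ∀ i, p i ≤ 1 := fun i => (h1 i).trans (by
    rw [div_le_one hk0]; exact_mod_cast hk)
  have key : ∀ i : Fin k, 1 - ∑ j ∈ univ.erase i, p j ≤ ∏ j ∈ univ.erase i, (1 - p j) :=
    fun i => weier _ p h0 h1'
  have hsum : ∑ i : Fin k, (1 - ∑ j ∈ univ.erase i, p j)
      ≤ ∑ i : Fin k, ∏ j ∈ univ.erase i, (1 - p j) :=
    Finset.sum_le_sum fun i _ => key i
  refine le_trans ?_ hsum
  have herase : ∀ i : Fin k, ∑ j ∈ univ.erase i, p j = (∑ j, p j) - p i := fun i =>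
    Finset.sum_erase_eq_sub (Finset.mem_univ i)
  have hS : ∑ j, p j ≤ 1 := by
    calc ∑ j, p j ≤ ∑ _j : Fin k, 1 / (k:ℝ) := Finset.sum_le_sum fun j _ => h1 j
    _ = 1 := by simp [Finset.card_univ]; field_simp
  simp only [herase, Finset.sum_sub_distrib, Finset.sum_const, Finset.card_univ,
    Fintype.card_fin, nsmul_eq_mul]
  have hSnn : 0 ≤ ∑ j, p j := Finset.sum_nonneg fun j _ => h0 j
  have : (1:ℝ) ≤ (k:ℝ) := by exact_mod_cast hk
  nlinarith [hS, hSnn]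
end

section
/- Let k > 2 and let p_1, ..., p_k be reals with 0 < p_i ≤ 1/k for all i. Then ∑_{i=1}^k ∏_{j≠i} (1 - p_j) > 1. -/
open Finset in
theorem stmt2 (k : ℕ) (hk : 2 < k) (p : Fin k → ℝ)
    (h0 : ∀ i, 0 < p i) (h1 : ∀ i, p i ≤ 1 / (k : ℝ)) :
    1 < ∑ i : Fin k, ∏ j ∈ univ.erase i, (1 - p j) := by
  have hk3 : (3:ℝ) ≤ (k:ℝ) := by exact_mod_cast hk
  have hkpos : (0:ℝ) < k := by linarith
  set c : ℝ := 1 - 1/(k:ℝ) with hc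
  have hk1 : 1/(k:ℝ) < 1 := by rw [div_lt_one hkpos]; linarith
  have hc0 : 0 < c := by simp only [hc]; linarith
  have key : ∀ i : Fin k, c ^ (k-1) ≤ ∏ j ∈ univ.erase i, (1 - p j) := by
    intro i
    have h := Finset.prod_le_prod (s := univ.erase i) (f := fun _ => c)
      (g := fun j => 1 - p j) (fun j _ => hc0.le)
      (fun j _ => by simp only [hc]; linarith [h1 j])
    simpa [Finset.prod_const, Finset.card_erase_of_mem, Finset.card_univ] using h
  -- Bernoulli: (1 - 1/k)^(k-1) > 1/k
  have hber : (1:ℝ)/k < c ^ (k-1) := by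
    have hb := one_add_mul_self_lt_rpow_one_add (s := -(1/(k:ℝ)))
      (by linarith) (neg_ne_zero.mpr (by positivity)) (p := ((k:ℝ)-1)) (by linarith)
    have hrw : ((1:ℝ) + -(1/(k:ℝ))) ^ ((k:ℝ)-1) = c ^ (k-1) := by
      have hcast : ((k:ℝ)-1) = ((k-1 : ℕ) : ℝ) := by
        rw [Nat.cast_sub (by omega), Nat.cast_one]
      rw [hcast, Real.rpow_natCast]
      norm_num [hc, sub_eq_add_neg]
    rw [hrw] at hb
    have : 1 + ((k:ℝ)-1) * -(1/(k:ℝ)) = 1/(k:ℝ) := by field_simp; ring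
    linarith [hb, this ▸ hb]
  calc (1:ℝ) = (k:ℝ) * (1/(k:ℝ)) := by field_simp
    _ < (k:ℝ) * c ^ (k-1) := by exact (mul_lt_mul_iff_right₀ hkpos).2 hber
    _ = ∑ _i : Fin k, c ^ (k-1) := by
        rw [Finset.sum_const, Finset.card_univ, Fintype.card_fin, nsmul_eq_mul]
    _ ≤ _ := Finset.sum_le_sum (fun i _ => key i)
end

section
/- Let S be a finite set of users with ON probabilities p_i ∈ (0,1), and consider any ordered schedule over S in a τ-slot frame with throughputs d_i = P(∑_{j ≤ position of i} X_j ≤ τ), where X_j are independent Geometric(p_j) on {1,2,...} in the schedule's order. Then ∑_{i∈S} d_i/p_i ≤ τ. -/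
/-- `schedThroughput p τ m` is the probability that the `(m+1)`-st user in the
ordered schedule delivers its packet within the `τ`-slot frame, i.e.
`P(X_0 + ⋯ + X_m ≤ τ)` where `X_j` are independent geometric (on `{1,2,…}`)
with parameters `p j`; here `x j : ℕ` encodes `X_j = x j + 1`. -/
noncomputable def schedThroughput {k : ℕ} (p : Fin k → ℝ) (τ : ℕ) (m : Fin k) : ℝ :=
  ∑' x : Fin (m.1 + 1) → ℕ,
    if (∑ j, (x j + 1)) ≤ τ then ∏ j : Fin (m.1 + 1), (1 - p (Fin.castLE m.2 j)) ^ (x j) * p (Fin.castLE m.2 j)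
    else 0

/-- `Fwork q n t = P(X_0 + ⋯ + X_{n-1} ≤ t)` computed recursively. -/
noncomputable def Fwork (q : ℕ → ℝ) : ℕ → ℕ → ℝ
  | 0, _ => 1
  | n+1, t => ∑ a ∈ Finset.range t, (1 - q n) ^ a * q n * Fwork q n (t - 1 - a)

lemma Fwork_zero (q : ℕ → ℝ) (t : ℕ) : Fwork q 0 t = 1 := rfl

lemma Fwork_succ (q : ℕ → ℝ) (n t : ℕ) :
    Fwork q (n+1) t = ∑ a ∈ Finset.range t, (1 - q n) ^ a * q n * Fwork q n (t - 1 - a) := rfl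

lemma Fwork_nonneg (q : ℕ → ℝ) (hq : ∀ i, q i ∈ Set.Ioo (0:ℝ) 1) :
    ∀ n t, 0 ≤ Fwork q n t := by
  intro n
  induction n with
  | zero => intro t; rw [Fwork_zero]; norm_num
  | succ n ih =>
    intro t
    rw [Fwork_succ]
    apply Finset.sum_nonneg
    intro a _
    have h1 := (hq n).1
    have h2 := (hq n).2
    exact mul_nonneg (mul_nonneg (pow_nonneg (by linarith) _) (le_of_lt h1)) (ih _)

lemma tsum_eq_Fwork (q : ℕ → ℝ) : ∀ n t,
    (∑' x : Fin n → ℕ,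
      if (∑ j, (x j + 1)) ≤ t then ∏ j : Fin n, (1 - q j.1) ^ (x j) * q j.1 else 0)
      = Fwork q n t := by
  intro n
  induction n with
  | zero =>
    intro t
    rw [tsum_eq_single (fun i => i.elim0)]
    · simp [Fwork_zero]
    · intro b hb; exact absurd (Subsingleton.elim _ _) hb
  | succ n ih =>
    intro t
    set f : (Fin (n+1) → ℕ) → ℝ := fun x =>
      if (∑ j, (x j + 1)) ≤ t then ∏ j : Fin (n+1), (1 - q j.1) ^ (x j) * q j.1 else 0 with hf
    have e := Fin.snocEquiv (fun _ : Fin (n+1) => ℕ)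
    show (∑' x, f x) = _
    rw [← Equiv.tsum_eq (Fin.snocEquiv (fun _ : Fin (n+1) => ℕ)) f]
    have hsum : ∀ (a : ℕ) (x : Fin n → ℕ),
        f (Fin.snocEquiv (fun _ : Fin (n+1) => ℕ) (a, x)) =
        if (∑ j, (x j + 1)) + (a + 1) ≤ t then
          (∏ j : Fin n, (1 - q j.1) ^ (x j) * q j.1) * ((1 - q n) ^ a * q n)
        else 0 := by
      intro a x
      simp only [hf, Fin.snocEquiv_apply]
      rw [Fin.sum_univ_castSucc, Fin.prod_univ_castSucc]
      simp [Fin.snoc_castSucc, Fin.snoc_last]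
    have hsupp : ∀ z : ℕ × (Fin n → ℕ),
        z ∉ (Finset.range t ×ˢ Fintype.piFinset fun _ : Fin n => Finset.range t) →
        f (Fin.snocEquiv (fun _ : Fin (n+1) => ℕ) z) = 0 := by
      rintro ⟨a, x⟩ hz
      simp only [Finset.mem_product, Fintype.mem_piFinset, Finset.mem_range, not_and,
        not_forall, not_lt] at hz
      rw [hsum, if_neg]
      by_cases ha : a < t
      · obtain ⟨j, hj⟩ := hz ha
        have hle : x j + 1 ≤ ∑ j', (x j' + 1) :=
          Finset.single_le_sum (f := fun j' => x j' + 1) (fun _ _ => Nat.zero_le _) (Finset.mem_univ j)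
        omega
      · omega
    have hsummable : Summable (fun z : ℕ × (Fin n → ℕ) =>
        f (Fin.snocEquiv (fun _ : Fin (n+1) => ℕ) z)) :=
      summable_of_ne_finset_zero hsupp
    have hsummable2 : ∀ a : ℕ, Summable (fun x : Fin n → ℕ =>
        f (Fin.snocEquiv (fun _ : Fin (n+1) => ℕ) (a, x))) := by
      intro a
      apply summable_of_ne_finset_zero (s := Fintype.piFinset fun _ : Fin n => Finset.range t)
      intro x hx
      rw [hsum, if_neg]
      rw [Fintype.mem_piFinset] at hx
      push_neg at hx
      obtain ⟨j, hj⟩ := hx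
      rw [Finset.mem_range] at hj
      push_neg at hj
      have : x j + 1 ≤ ∑ j', (x j' + 1) :=
        Finset.single_le_sum (f := fun j' => x j' + 1) (fun _ _ => Nat.zero_le _) (Finset.mem_univ j)
      omega
    rw [Summable.tsum_prod' hsummable hsummable2]
    have hinner : ∀ a : ℕ,
        (∑' x : Fin n → ℕ, f (Fin.snocEquiv (fun _ : Fin (n+1) => ℕ) (a, x))) =
        if a < t then (1 - q n) ^ a * q n * Fwork q n (t - 1 - a) else 0 := by
      intro a
      by_cases ha : a < t
      · rw [if_pos ha, ← ih (t - 1 - a)]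
        rw [← tsum_mul_left]
        apply tsum_congr
        intro x
        rw [hsum]
        by_cases hc : (∑ j, (x j + 1)) ≤ t - 1 - a
        · rw [if_pos (by omega), if_pos hc]; ring
        · rw [if_neg (by omega), if_neg hc, mul_zero]
      · have : ∀ x : Fin n → ℕ,
            f (Fin.snocEquiv (fun _ : Fin (n+1) => ℕ) (a, x)) = 0 := by
          intro x; rw [hsum, if_neg (by omega)]
        simp only [this, tsum_zero, if_neg ha]
    rw [tsum_congr hinner]
    rw [tsum_eq_sum (s := Finset.range t)
      (by intro a ha; rw [Finset.mem_range] at ha; rw [if_neg (by omega)])]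
    rw [Fwork_succ]
    apply Finset.sum_congr rfl
    intro a ha
    rw [Finset.mem_range] at ha
    rw [if_pos ha]

lemma sum_H (G : ℕ → ℝ) (q : ℝ) (t : ℕ) :
    ∑ s ∈ Finset.range t, (∑ a ∈ Finset.range s, (1 - q) ^ a * q * G (s - 1 - a))
      = ∑ u ∈ Finset.range t, G u * (1 - (1 - q) ^ (t - 1 - u)) := by
  induction t with
  | zero => simp
  | succ t ih =>
    rw [Finset.sum_range_succ, ih, Finset.sum_range_succ]
    have hH : ∑ a ∈ Finset.range t, (1 - q) ^ a * q * G (t - 1 - a)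
        = ∑ u ∈ Finset.range t, (1 - q) ^ (t - 1 - u) * q * G u := by
      rw [← Finset.sum_range_reflect (fun u => (1 - q) ^ (t - 1 - u) * q * G u) t]
      apply Finset.sum_congr rfl
      intro a ha
      rw [Finset.mem_range] at ha
      rw [show t - 1 - (t - 1 - a) = a from by omega]
    rw [hH]
    rw [show t + 1 - 1 - t = 0 from by omega, pow_zero, sub_self, mul_zero, add_zero]
    rw [← Finset.sum_add_distrib]
    apply Finset.sum_congr rfl
    intro u hu
    rw [Finset.mem_range] at hu
    rw [show t + 1 - 1 - u = (t - 1 - u) + 1 from by omega, pow_succ]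
    ring

lemma key_identity (G : ℕ → ℝ) (q : ℝ) (hq : q ≠ 0) (t : ℕ) :
    (∑ a ∈ Finset.range t, (1 - q) ^ a * q * G (t - 1 - a)) / q
      = ∑ s ∈ Finset.range t,
          (G s - ∑ a ∈ Finset.range s, (1 - q) ^ a * q * G (s - 1 - a)) := by
  rw [Finset.sum_sub_distrib, sum_H]
  have hH : ∑ a ∈ Finset.range t, (1 - q) ^ a * q * G (t - 1 - a)
      = ∑ u ∈ Finset.range t, (1 - q) ^ (t - 1 - u) * q * G u := by
    rw [← Finset.sum_range_reflect (fun u => (1 - q) ^ (t - 1 - u) * q * G u) t]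
    apply Finset.sum_congr rfl
    intro a ha
    rw [Finset.mem_range] at ha
    rw [show t - 1 - (t - 1 - a) = a from by omega]
  rw [hH, Finset.sum_div, ← Finset.sum_sub_distrib]
  apply Finset.sum_congr rfl
  intro u _
  field_simp
  ring

theorem stmt19 (k : ℕ) (p : Fin k → ℝ) (hp : ∀ i, p i ∈ Set.Ioo (0 : ℝ) 1)
    (τ : ℕ) (hτ : 1 ≤ τ) :
    ∑ m : Fin k, schedThroughput p τ m / p m ≤ (τ : ℝ) := by
  set q : ℕ → ℝ := fun i => if h : i < k then p ⟨i, h⟩ else 1/2 with hqdef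
  have hq : ∀ i, q i ∈ Set.Ioo (0:ℝ) 1 := by
    intro i
    simp only [hqdef]
    split
    · exact hp _
    · norm_num
  have hst : ∀ m : Fin k, schedThroughput p τ m = Fwork q (m.1 + 1) τ := by
    intro m
    rw [← tsum_eq_Fwork q (m.1 + 1) τ]
    unfold schedThroughput
    apply tsum_congr
    intro x
    have hpq : ∀ j : Fin (m.1 + 1), p (Fin.castLE m.2 j) = q j.1 := by
      intro j
      have hj : j.1 < k := lt_of_lt_of_le j.2 m.2
      simp only [hqdef]
      rw [dif_pos hj]
      congr 1
    simp only [hpq]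
  have hpq' : ∀ m : Fin k, p m = q m.1 := by
    intro m
    simp only [hqdef]
    rw [dif_pos m.2]
  have hkey : ∀ m : ℕ, Fwork q (m + 1) τ / q m
      = ∑ s ∈ Finset.range τ, (Fwork q m s - Fwork q (m + 1) s) := by
    intro m
    have := key_identity (Fwork q m) (q m) (ne_of_gt (hq m).1) τ
    simp only [← Fwork_succ] at this
    exact this
  calc ∑ m : Fin k, schedThroughput p τ m / p m
      = ∑ m ∈ Finset.range k, Fwork q (m + 1) τ / q m := by
        rw [← Fin.sum_univ_eq_sum_range (fun m => Fwork q (m + 1) τ / q m) k]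
        apply Finset.sum_congr rfl
        intro m _
        rw [hst m, hpq' m]
    _ = ∑ s ∈ Finset.range τ, ∑ m ∈ Finset.range k, (Fwork q m s - Fwork q (m + 1) s) := by
        rw [Finset.sum_comm]
        apply Finset.sum_congr rfl
        intro m _
        exact hkey m
    _ = ∑ s ∈ Finset.range τ, (Fwork q 0 s - Fwork q k s) := by
        apply Finset.sum_congr rfl
        intro s _
        exact Finset.sum_range_sub' (fun m => Fwork q m s) k
    _ ≤ ∑ s ∈ Finset.range τ, 1 := by
        apply Finset.sum_le_sum
        intro s _
        rw [Fwork_zero]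
        have := Fwork_nonneg q hq k s
        linarith
    _ = (τ : ℝ) := by simp
end
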